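/- For all 1 ≤ i, j ≤ n with i ≠ j, all signs a, b ∈ {+1,−1}, and every nonzero t ∈ F, one has h_{ai,bj}(t) = I + (t−1)·E_{ai,ai} + (t−1)·E_{bj,bj} + (t⁻¹−1)·E_{−bj,−bj} + (t⁻¹−1)·E_{−ai,−ai}; in particular h_{ai,bj}(t) is a diagonal matrix, and consequently h_{ai,bj}(t) · h_{ai,bj}(u) = h_{ai,bj}(t·u) for all nonzero t, u ∈ F. -/

import Mathlib

open Matrix

/-- Index set `{-n, …, n}` for (2n+1)×(2n+1) matrices. -/
abbrev BIdx (n : ℕ) : Type := {z : ℤ // z ∈ Finset.Icc (-(n : ℤ)) (n : ℤ)}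

/-- `Eb F n p q` : the matrix with a 1 in entry (p,q) and 0 elsewhere
(rows and columns indexed by `{-n, …, n}`). -/
def Eb (F : Type*) [Field F] (n : ℕ) (p q : ℤ) : Matrix (BIdx n) (BIdx n) F :=
  Matrix.of fun r c => if ((r : ℤ) = p ∧ (c : ℤ) = q) then 1 else 0

/-- Short-root matrix `S^a_i(t) := I + 2at·E_{ai,0} − at·E_{0,−ai} − t²·E_{ai,−ai}`. -/
def Sb (F : Type*) [Field F] (n : ℕ) (a i : ℤ) (t : F) : Matrix (BIdx n) (BIdx n) F :=
  1 + (2 * (a : F) * t) • Eb F n (a * i) 0 - ((a : F) * t) • Eb F n 0 (-(a * i))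
    - t ^ 2 • Eb F n (a * i) (-(a * i))

/-- Long-root matrix `L^{a,b}_{i,j}(t) := I + at·E_{ai,−bj} − at·E_{bj,−ai}`. -/
def Lb (F : Type*) [Field F] (n : ℕ) (a b i j : ℤ) (t : F) : Matrix (BIdx n) (BIdx n) F :=
  1 + ((a : F) * t) • Eb F n (a * i) (-(b * j)) - ((a : F) * t) • Eb F n (b * j) (-(a * i))


/-- `g_{ai,bj}(t) := L^{a,b}_{i,j}(t) · L^{−a,−b}_{i,j}(−t⁻¹) · L^{a,b}_{i,j}(t)`. -/
noncomputable def gB (F : Type*) [Field F] (n : ℕ) (a b i j : ℤ) (t : F) : Matrix (BIdx n) (BIdx n) F :=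
  Lb F n a b i j t * Lb F n (-a) (-b) i j (-t⁻¹) * Lb F n a b i j t

/-- `h_{ai,bj}(t) := g_{ai,bj}(t) · g_{ai,bj}(−1)`. -/
noncomputable def hB (F : Type*) [Field F] (n : ℕ) (a b i j : ℤ) (t : F) : Matrix (BIdx n) (BIdx n) F :=
  gB F n a b i j t * gB F n a b i j (-1)

lemma Eb_mul_of_mem (F : Type*) [Field F] (n : ℕ) (p q s : ℤ)
    (hq : q ∈ Finset.Icc (-(n : ℤ)) (n : ℤ)) :
    Eb F n p q * Eb F n q s = Eb F n p s := by
  ext x y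
  rw [Matrix.mul_apply, Fintype.sum_eq_single (⟨q, hq⟩ : BIdx n)]
  · simp only [Eb, Matrix.of_apply]
    split_ifs <;> simp_all
  · intro k hk
    have hk' : (k : ℤ) ≠ q := fun h => hk (Subtype.ext h)
    simp [Eb, hk']

lemma Eb_mul_of_ne (F : Type*) [Field F] (n : ℕ) (p q r s : ℤ) (h : q ≠ r) :
    Eb F n p q * Eb F n r s = 0 := by
  ext x y
  rw [Matrix.mul_apply]
  refine Finset.sum_eq_zero fun k _ => ?_
  by_cases hk : (k : ℤ) = q
  · simp [Eb, hk, h]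
  · simp [Eb, hk]

section core
variable (F : Type*) [Field F] (n : ℕ) (s r : ℤ)
variable (hs : s ∈ Finset.Icc (-(n : ℤ)) (n : ℤ)) (hr : r ∈ Finset.Icc (-(n : ℤ)) (n : ℤ))
variable (hns : -s ∈ Finset.Icc (-(n : ℤ)) (n : ℤ)) (hnr : -r ∈ Finset.Icc (-(n : ℤ)) (n : ℤ))
variable (h1 : s ≠ r) (h2 : s ≠ -r) (h3 : s ≠ -s) (h4 : r ≠ -r)

include hs hr hns hnr h1 h2 h3 h4 in
lemma gcore (c : F) (hc : c ≠ 0) :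
    (1 + c • Eb F n s (-r) - c • Eb F n r (-s)) *
      (1 + c⁻¹ • Eb F n (-s) r - c⁻¹ • Eb F n (-r) s) *
      (1 + c • Eb F n s (-r) - c • Eb F n r (-s))
    = 1 - Eb F n s s - Eb F n r r - Eb F n (-s) (-s) - Eb F n (-r) (-r)
        + c • Eb F n s (-r) - c • Eb F n r (-s)
        + c⁻¹ • Eb F n (-s) r - c⁻¹ • Eb F n (-r) s := by
  have h5 : r ≠ s := by omega
  have h6 : -s ≠ -r := by omega
  have h7 : -r ≠ -s := by omega
  have h8 : -r ≠ s := by omega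
  have h9 : -s ≠ r := by omega
  have h10 : r ≠ -s := by omega
  have h11 : -s ≠ s := by omega
  have h12 : -r ≠ r := by omega
  have hcc : c * c⁻¹ = 1 := mul_inv_cancel₀ hc
  have hcc' : c⁻¹ * c = 1 := inv_mul_cancel₀ hc
  simp only [mul_add, add_mul, mul_sub, sub_mul, mul_one, one_mul,
    smul_mul_assoc, mul_smul_comm, smul_smul,
    Eb_mul_of_mem _ _ _ _ _ hs, Eb_mul_of_mem _ _ _ _ _ hr,
    Eb_mul_of_mem _ _ _ _ _ hns, Eb_mul_of_mem _ _ _ _ _ hnr,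
    Eb_mul_of_ne _ _ _ _ _ _ h1, Eb_mul_of_ne _ _ _ _ _ _ h2,
    Eb_mul_of_ne _ _ _ _ _ _ h3, Eb_mul_of_ne _ _ _ _ _ _ h4,
    Eb_mul_of_ne _ _ _ _ _ _ h5, Eb_mul_of_ne _ _ _ _ _ _ h6,
    Eb_mul_of_ne _ _ _ _ _ _ h7, Eb_mul_of_ne _ _ _ _ _ _ h8,
    Eb_mul_of_ne _ _ _ _ _ _ h9, Eb_mul_of_ne _ _ _ _ _ _ h10,
    Eb_mul_of_ne _ _ _ _ _ _ h11, Eb_mul_of_ne _ _ _ _ _ _ h12,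
    hcc, hcc', one_smul, smul_zero, mul_zero, zero_mul, add_zero, zero_add,
    sub_zero, zero_sub, neg_neg]
  match_scalars <;> field_simp <;> ring

include hs hr hns hnr h1 h2 h3 h4 in
lemma hcore (c d : F) :
    (1 - Eb F n s s - Eb F n r r - Eb F n (-s) (-s) - Eb F n (-r) (-r)
        + c • Eb F n s (-r) - c • Eb F n r (-s)
        + c⁻¹ • Eb F n (-s) r - c⁻¹ • Eb F n (-r) s) *
    (1 - Eb F n s s - Eb F n r r - Eb F n (-s) (-s) - Eb F n (-r) (-r)
        - d • Eb F n s (-r) + d • Eb F n r (-s)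
        - d • Eb F n (-s) r + d • Eb F n (-r) s)
    = 1 + (c * d - 1) • Eb F n s s + (c * d - 1) • Eb F n r r
        + (c⁻¹ * d - 1) • Eb F n (-r) (-r) + (c⁻¹ * d - 1) • Eb F n (-s) (-s) := by
  have h5 : r ≠ s := by omega
  have h6 : -s ≠ -r := by omega
  have h7 : -r ≠ -s := by omega
  have h8 : -r ≠ s := by omega
  have h9 : -s ≠ r := by omega
  have h10 : r ≠ -s := by omega
  have h11 : -s ≠ s := by omega
  have h12 : -r ≠ r := by omega
  simp only [mul_add, add_mul, mul_sub, sub_mul, mul_one, one_mul,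
    smul_mul_assoc, mul_smul_comm, smul_smul,
    Eb_mul_of_mem _ _ _ _ _ hs, Eb_mul_of_mem _ _ _ _ _ hr,
    Eb_mul_of_mem _ _ _ _ _ hns, Eb_mul_of_mem _ _ _ _ _ hnr,
    Eb_mul_of_ne _ _ _ _ _ _ h1, Eb_mul_of_ne _ _ _ _ _ _ h2,
    Eb_mul_of_ne _ _ _ _ _ _ h3, Eb_mul_of_ne _ _ _ _ _ _ h4,
    Eb_mul_of_ne _ _ _ _ _ _ h5, Eb_mul_of_ne _ _ _ _ _ _ h6,
    Eb_mul_of_ne _ _ _ _ _ _ h7, Eb_mul_of_ne _ _ _ _ _ _ h8,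
    Eb_mul_of_ne _ _ _ _ _ _ h9, Eb_mul_of_ne _ _ _ _ _ _ h10,
    Eb_mul_of_ne _ _ _ _ _ _ h11, Eb_mul_of_ne _ _ _ _ _ _ h12,
    one_smul, smul_zero, mul_zero, zero_mul, add_zero, zero_add,
    sub_zero, zero_sub, neg_neg]
  module

include hs hr hns hnr h1 h2 h3 h4 in
lemma mulcore (p1 p2 p3 p4 q1 q2 q3 q4 : F) :
    (1 + p1 • Eb F n s s + p2 • Eb F n r r + p3 • Eb F n (-r) (-r) + p4 • Eb F n (-s) (-s)) *
    (1 + q1 • Eb F n s s + q2 • Eb F n r r + q3 • Eb F n (-r) (-r) + q4 • Eb F n (-s) (-s))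
    = 1 + (p1 + q1 + p1 * q1) • Eb F n s s + (p2 + q2 + p2 * q2) • Eb F n r r
        + (p3 + q3 + p3 * q3) • Eb F n (-r) (-r)
        + (p4 + q4 + p4 * q4) • Eb F n (-s) (-s) := by
  have h5 : r ≠ s := by omega
  have h6 : -s ≠ -r := by omega
  have h7 : -r ≠ -s := by omega
  have h8 : -r ≠ s := by omega
  have h9 : -s ≠ r := by omega
  have h10 : r ≠ -s := by omega
  have h11 : -s ≠ s := by omega
  have h12 : -r ≠ r := by omega
  simp only [mul_add, add_mul, mul_one, one_mul,
    smul_mul_assoc, mul_smul_comm, smul_smul,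
    Eb_mul_of_mem _ _ _ _ _ hs, Eb_mul_of_mem _ _ _ _ _ hr,
    Eb_mul_of_mem _ _ _ _ _ hns, Eb_mul_of_mem _ _ _ _ _ hnr,
    Eb_mul_of_ne _ _ _ _ _ _ h1, Eb_mul_of_ne _ _ _ _ _ _ h2,
    Eb_mul_of_ne _ _ _ _ _ _ h3, Eb_mul_of_ne _ _ _ _ _ _ h4,
    Eb_mul_of_ne _ _ _ _ _ _ h5, Eb_mul_of_ne _ _ _ _ _ _ h6,
    Eb_mul_of_ne _ _ _ _ _ _ h7, Eb_mul_of_ne _ _ _ _ _ _ h8,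
    Eb_mul_of_ne _ _ _ _ _ _ h9, Eb_mul_of_ne _ _ _ _ _ _ h10,
    Eb_mul_of_ne _ _ _ _ _ _ h11, Eb_mul_of_ne _ _ _ _ _ _ h12,
    one_smul, smul_zero, mul_zero, zero_mul, add_zero, zero_add, neg_neg]
  module

include h1 h2 h3 h4 in
lemma diagcore (c1 c2 c3 c4 : F) :
    1 + c1 • Eb F n s s + c2 • Eb F n r r + c3 • Eb F n (-r) (-r) + c4 • Eb F n (-s) (-s)
    = Matrix.diagonal (fun k : BIdx n => if (k : ℤ) = s then 1 + c1 else if (k : ℤ) = r then 1 + c2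
        else if (k : ℤ) = -r then 1 + c3 else if (k : ℤ) = -s then 1 + c4 else 1) := by
  have d1 : r ≠ s := by omega
  have d2 : -s ≠ -r := by omega
  have d3 : -r ≠ -s := by omega
  have d4 : -r ≠ s := by omega
  have d5 : -s ≠ r := by omega
  have d6 : r ≠ -s := by omega
  have d7 : -s ≠ s := by omega
  have d8 : -r ≠ r := by omega
  ext x y
  obtain ⟨x, hx⟩ := x
  obtain ⟨y, hy⟩ := y
  simp only [Matrix.add_apply, Matrix.smul_apply, Matrix.one_apply, Eb, Matrix.of_apply,
    Matrix.diagonal_apply, Subtype.mk.injEq, smul_eq_mul]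
  by_cases hxy : x = y
  · subst hxy
    by_cases e1 : x = s
    · have n2 : ¬ (x = r) := by omega
      have n3 : ¬ (x = -r) := by omega
      have n4 : ¬ (x = -s) := by omega
      simp [e1, n2, n3, n4, h1, h2, h3, h4, d1, d2, d3, d4, d5, d6, d7, d8]
    · by_cases e2 : x = r
      · have n3 : ¬ (x = -r) := by omega
        have n4 : ¬ (x = -s) := by omega
        simp [e1, e2, n3, n4, h1, h2, h3, h4, d1, d2, d3, d4, d5, d6, d7, d8]
      · by_cases e3 : x = -r
        · have n4 : ¬ (x = -s) := by omega
          simp [e1, e2, e3, n4, h1, h2, h3, h4, d1, d2, d3, d4, d5, d6, d7, d8]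
        · by_cases e4 : x = -s
          · simp [e1, e2, e3, e4, h1, h2, h3, h4, d1, d2, d3, d4, d5, d6, d7, d8]
          · simp [e1, e2, e3, e4, h1, h2, h3, h4, d1, d2, d3, d4, d5, d6, d7, d8]
  · have hfalse : ∀ p : ℤ, (x = p ∧ y = p) = False := fun p =>
      eq_false (fun h => hxy (h.1.trans h.2.symm))
    simp [hxy, hfalse]

end core

/-- For `i ≠ j` and nonzero `t`,
`h_{ai,bj}(t) = I + (t−1)·E_{ai,ai} + (t−1)·E_{bj,bj} + (t⁻¹−1)·E_{−bj,−bj}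
  + (t⁻¹−1)·E_{−ai,−ai}`;
in particular `h_{ai,bj}(t)` is a diagonal matrix, and consequently
`h_{ai,bj}(t) · h_{ai,bj}(u) = h_{ai,bj}(t·u)` for all nonzero `t, u`. -/
theorem typeB_h_formula (F : Type*) [Field F] (n : ℕ) (hn : 1 ≤ n)
    (a b : ℤ) (ha : a = 1 ∨ a = -1) (hb : b = 1 ∨ b = -1)
    (i j : ℤ) (hi1 : 1 ≤ i) (hin : i ≤ (n : ℤ)) (hj1 : 1 ≤ j) (hjn : j ≤ (n : ℤ))
    (hij : i ≠ j) (t : F) (ht : t ≠ 0) :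
    hB F n a b i j t
      = 1 + (t - 1) • Eb F n (a * i) (a * i)
          + (t - 1) • Eb F n (b * j) (b * j)
          + (t⁻¹ - 1) • Eb F n (-(b * j)) (-(b * j))
          + (t⁻¹ - 1) • Eb F n (-(a * i)) (-(a * i)) ∧
    (∃ d : BIdx n → F, hB F n a b i j t = Matrix.diagonal d) ∧
    (∀ u : F, u ≠ 0 → hB F n a b i j t * hB F n a b i j u = hB F n a b i j (t * u)) := by
  have hms : a * i ∈ Finset.Icc (-(n : ℤ)) (n : ℤ) := by
    rw [Finset.mem_Icc]; rcases ha with rfl | rfl <;> omega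
  have hmr : b * j ∈ Finset.Icc (-(n : ℤ)) (n : ℤ) := by
    rw [Finset.mem_Icc]; rcases hb with rfl | rfl <;> omega
  have hmns : -(a * i) ∈ Finset.Icc (-(n : ℤ)) (n : ℤ) := by
    rw [Finset.mem_Icc]; rcases ha with rfl | rfl <;> omega
  have hmnr : -(b * j) ∈ Finset.Icc (-(n : ℤ)) (n : ℤ) := by
    rw [Finset.mem_Icc]; rcases hb with rfl | rfl <;> omega
  have hne1 : a * i ≠ b * j := by
    rcases ha with rfl | rfl <;> rcases hb with rfl | rfl <;> omega
  have hne2 : a * i ≠ -(b * j) := by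
    rcases ha with rfl | rfl <;> rcases hb with rfl | rfl <;> omega
  have hne3 : a * i ≠ -(a * i) := by rcases ha with rfl | rfl <;> omega
  have hne4 : b * j ≠ -(b * j) := by rcases hb with rfl | rfl <;> omega
  have hαne : (a : F) ≠ 0 := by rcases ha with rfl | rfl <;> norm_num
  have hαα : (a : F) * (a : F) = 1 := by rcases ha with rfl | rfl <;> norm_num
  have hαinv : ((a : F))⁻¹ = (a : F) := by rcases ha with rfl | rfl <;> norm_num
  have key : ∀ u : F, u ≠ 0 → gB F n a b i j u
      = 1 - Eb F n (a * i) (a * i) - Eb F n (b * j) (b * j)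
          - Eb F n (-(a * i)) (-(a * i)) - Eb F n (-(b * j)) (-(b * j))
          + ((a : F) * u) • Eb F n (a * i) (-(b * j))
          - ((a : F) * u) • Eb F n (b * j) (-(a * i))
          + ((a : F) * u)⁻¹ • Eb F n (-(a * i)) (b * j)
          - ((a : F) * u)⁻¹ • Eb F n (-(b * j)) (a * i) := by
    intro u hu
    have hc : (a : F) * u ≠ 0 := mul_ne_zero hαne hu
    have hinv : ((a : F) * u)⁻¹ = (a : F) * u⁻¹ := by rw [mul_inv, hαinv]
    have hL2 : Lb F n (-a) (-b) i j (-u⁻¹)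
        = 1 + ((a : F) * u)⁻¹ • Eb F n (-(a * i)) (b * j)
            - ((a : F) * u)⁻¹ • Eb F n (-(b * j)) (a * i) := by
      simp only [Lb, Int.cast_neg, neg_mul, neg_neg, mul_neg, hinv]
    simp only [gB]
    rw [hL2]
    simp only [Lb]
    exact gcore F n (a * i) (b * j) hms hmr hmns hmnr hne1 hne2 hne3 hne4 ((a : F) * u) hc
  have g1 : gB F n a b i j (-1)
      = 1 - Eb F n (a * i) (a * i) - Eb F n (b * j) (b * j)
          - Eb F n (-(a * i)) (-(a * i)) - Eb F n (-(b * j)) (-(b * j))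
          - (a : F) • Eb F n (a * i) (-(b * j))
          + (a : F) • Eb F n (b * j) (-(a * i))
          - (a : F) • Eb F n (-(a * i)) (b * j)
          + (a : F) • Eb F n (-(b * j)) (a * i) := by
    rw [key (-1) (by norm_num)]
    rw [show ((a : F) * (-1) : F) = -(a : F) from by ring]
    rw [show ((-(a : F))⁻¹ : F) = -(a : F) from by rw [inv_neg, hαinv]]
    module
  have hform : ∀ v : F, v ≠ 0 → hB F n a b i j v
      = 1 + (v - 1) • Eb F n (a * i) (a * i)
          + (v - 1) • Eb F n (b * j) (b * j)
          + (v⁻¹ - 1) • Eb F n (-(b * j)) (-(b * j))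
          + (v⁻¹ - 1) • Eb F n (-(a * i)) (-(a * i)) := by
    intro v hv
    have e1 : (a : F) * v * (a : F) = v := by linear_combination v * hαα
    have e2 : ((a : F) * v)⁻¹ * (a : F) = v⁻¹ := by
      rw [mul_inv, hαinv]; linear_combination v⁻¹ * hαα
    simp only [hB]
    rw [key v hv, g1,
      hcore F n (a * i) (b * j) hms hmr hmns hmnr hne1 hne2 hne3 hne4 ((a : F) * v) (a : F),
      e1, e2]
  refine ⟨hform t ht, ?_, ?_⟩
  · rw [hform t ht,
      diagcore F n (a * i) (b * j) hne1 hne2 hne3 hne4 (t - 1) (t - 1) (t⁻¹ - 1) (t⁻¹ - 1)]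
    exact ⟨_, rfl⟩
  · intro u hu
    rw [hform t ht, hform u hu, hform (t * u) (mul_ne_zero ht hu),
      mulcore F n (a * i) (b * j) hms hmr hmns hmnr hne1 hne2 hne3 hne4
        (t - 1) (t - 1) (t⁻¹ - 1) (t⁻¹ - 1) (u - 1) (u - 1) (u⁻¹ - 1) (u⁻¹ - 1),
      mul_inv]
    module
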